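/- If v ∈ H satisfies 𝐈v = v, Y₊v = 0 and Y₋v = 0, then Tv = −(1/2)v when 𝐉v = v and Tv = (1/2)v when 𝐉v = −v. If v satisfies 𝐈v = v, Y₊v = v and Y₋v = v, then Tv = v when 𝐉v = v and Tv = −v when 𝐉v = −v. If v satisfies 𝐈v = −v, Y₊v = 0 and Y₋v = 0, then Tv = 0 and T*v = 0. -/

import Mathlib

noncomputable section

abbrev SL2Z := Matrix.SpecialLinearGroup (Fin 2) ℤ

def Lmat : SL2Z := ⟨!![1, 1; 0, 1], by decide⟩
def Rmat : SL2Z := ⟨!![1, 0; 1, 1], by decide⟩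
def Jmat : SL2Z := ⟨!![0, 1; -1, 0], by decide⟩
def Imat : SL2Z := ⟨!![-1, 0; 0, -1], by decide⟩

variable {H : Type*} [NormedAddCommGroup H] [InnerProductSpace ℂ H] [CompleteSpace H]

/-- The bounded operator associated to a group element by the unitary representation. -/
def rop (ρ : SL2Z →* unitary (H →L[ℂ] H)) (g : SL2Z) : H →L[ℂ] H := (ρ g : H →L[ℂ] H)

/-- The Markov operator T = (𝐋 + 𝐑)/2. -/
def opT (ρ : SL2Z →* unitary (H →L[ℂ] H)) : H →L[ℂ] H := (2 : ℂ)⁻¹ • (rop ρ Lmat + rop ρ Rmat)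

/-- Y₊ = (1/3)((3/2)·id − (1/2)𝐈 + 𝐑⁻¹𝐋 + 𝐋⁻¹𝐑). -/
def opYp (ρ : SL2Z →* unitary (H →L[ℂ] H)) : H →L[ℂ] H :=
  (3 : ℂ)⁻¹ • ((3 / 2 : ℂ) • (1 : H →L[ℂ] H) - (2 : ℂ)⁻¹ • rop ρ Imat
    + rop ρ Rmat⁻¹ * rop ρ Lmat + rop ρ Lmat⁻¹ * rop ρ Rmat)

/-- Y₋ = 𝐉* Y₊ 𝐉. -/
def opYm (ρ : SL2Z →* unitary (H →L[ℂ] H)) : H →L[ℂ] H :=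
  ContinuousLinearMap.adjoint (rop ρ Jmat) * opYp ρ * rop ρ Jmat

lemma rop_rop (ρ : SL2Z →* unitary (H →L[ℂ] H)) (g h : SL2Z) (v : H) :
    rop ρ g (rop ρ h v) = rop ρ (g * h) v := by
  rw [rop, rop, rop, map_mul]; rfl

lemma rop_one (ρ : SL2Z →* unitary (H →L[ℂ] H)) (v : H) : rop ρ 1 v = v := by
  rw [rop, map_one]; rfl

lemma rop_adjoint (ρ : SL2Z →* unitary (H →L[ℂ] H)) (g : SL2Z) :
    ContinuousLinearMap.adjoint (rop ρ g) = rop ρ g⁻¹ := by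
  rw [← ContinuousLinearMap.star_eq_adjoint, rop, rop, map_inv, ← Unitary.coe_star,
    Unitary.star_eq_inv]

lemma Yp_apply (ρ : SL2Z →* unitary (H →L[ℂ] H)) (v : H) :
    opYp ρ v = (3 : ℂ)⁻¹ • ((3 / 2 : ℂ) • v - (2 : ℂ)⁻¹ • rop ρ Imat v
      + rop ρ (Rmat⁻¹ * Lmat) v + rop ρ (Lmat⁻¹ * Rmat) v) := by
  rw [opYp]
  simp only [ContinuousLinearMap.smul_apply, ContinuousLinearMap.add_apply,
    ContinuousLinearMap.sub_apply, ContinuousLinearMap.mul_apply,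
    ContinuousLinearMap.one_apply, rop_rop]

lemma Ym_apply (ρ : SL2Z →* unitary (H →L[ℂ] H)) (v : H) :
    opYm ρ v = (3 : ℂ)⁻¹ • ((3 / 2 : ℂ) • v - (2 : ℂ)⁻¹ • rop ρ Imat v
      + rop ρ (Lmat * Rmat⁻¹) v + rop ρ (Rmat * Lmat⁻¹) v) := by
  have h1 : Jmat⁻¹ * (Imat * Jmat) = Imat := Subtype.ext (by decide)
  have h2 : Jmat⁻¹ * (Rmat⁻¹ * (Lmat * Jmat)) = Lmat * Rmat⁻¹ := Subtype.ext (by decide)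
  have h3' : Jmat⁻¹ * (Lmat⁻¹ * (Rmat * Jmat)) = Rmat * Lmat⁻¹ := Subtype.ext (by decide)
  have h4 : Jmat⁻¹ * Jmat = (1 : SL2Z) := inv_mul_cancel _
  rw [opYm, ContinuousLinearMap.mul_apply, ContinuousLinearMap.mul_apply, rop_adjoint, opYp]
  simp only [ContinuousLinearMap.smul_apply, ContinuousLinearMap.add_apply,
    ContinuousLinearMap.sub_apply, ContinuousLinearMap.mul_apply,
    ContinuousLinearMap.one_apply, map_smul, map_sub, map_add, rop_rop, h1, h2, h3', h4,
    rop_one]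

lemma T_formula (ρ : SL2Z →* unitary (H →L[ℂ] H)) (v : H) (hI : rop ρ Imat v = v)
    (ε : ℂ) (hJ : rop ρ Jmat v = ε • v) :
    opT ρ v = ε • ((3 / 2 : ℂ) • opYm ρ v - (2 : ℂ)⁻¹ • v) := by
  have e1 : Jmat⁻¹ = Imat * Jmat := Subtype.ext (by decide)
  have hJinv : rop ρ Jmat⁻¹ v = ε • v := by
    rw [e1, ← rop_rop, hJ, map_smul, hI]
  have e2 : Lmat = Rmat * Lmat⁻¹ * Jmat := Subtype.ext (by decide)
  have hL : rop ρ Lmat v = ε • rop ρ (Rmat * Lmat⁻¹) v := by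
    conv_lhs => rw [e2]
    rw [← rop_rop, hJ, map_smul]
  have e3 : Rmat = Lmat * Rmat⁻¹ * Jmat⁻¹ := Subtype.ext (by decide)
  have hR : rop ρ Rmat v = ε • rop ρ (Lmat * Rmat⁻¹) v := by
    conv_lhs => rw [e3]
    rw [← rop_rop, hJinv, map_smul]
  have hYm := Ym_apply ρ v
  rw [hI] at hYm
  have hX : rop ρ (Rmat * Lmat⁻¹) v = (3 : ℂ) • opYm ρ v
      - ((3 / 2 : ℂ) • v - (2 : ℂ)⁻¹ • v + rop ρ (Lmat * Rmat⁻¹) v) := by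
    rw [hYm, smul_inv_smul₀ (by norm_num : (3 : ℂ) ≠ 0)]
    abel
  rw [opT, ContinuousLinearMap.smul_apply, ContinuousLinearMap.add_apply, hL, hR, hX]
  module

/-- On the joint kernel of Y₊, Y₋ inside H⁺ the operator T acts as ∓(1/2) according to the
𝐉-eigenvalue ±1; on the joint range inside H⁺ it acts as ±1; and on the joint kernel inside
H⁻ both T and T* vanish. -/
theorem T_on_kernel_and_range_subspaces (ρ : SL2Z →* unitary (H →L[ℂ] H)) (v : H) :
    ((rop ρ Imat v = v ∧ opYp ρ v = 0 ∧ opYm ρ v = 0) →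
      ((rop ρ Jmat v = v → opT ρ v = (-(1 / 2) : ℂ) • v) ∧
       (rop ρ Jmat v = -v → opT ρ v = ((1 / 2) : ℂ) • v))) ∧
    ((rop ρ Imat v = v ∧ opYp ρ v = v ∧ opYm ρ v = v) →
      ((rop ρ Jmat v = v → opT ρ v = v) ∧
       (rop ρ Jmat v = -v → opT ρ v = -v))) ∧
    ((rop ρ Imat v = -v ∧ opYp ρ v = 0 ∧ opYm ρ v = 0) →
      (opT ρ v = 0 ∧ ContinuousLinearMap.adjoint (opT ρ) v = 0)) := by
  refine ⟨?_, ?_, ?_⟩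
  · rintro ⟨hI, -, hYm⟩
    constructor
    · intro hJ
      rw [T_formula ρ v hI 1 (by simpa using hJ), hYm]
      module
    · intro hJ
      rw [T_formula ρ v hI (-1) (by simpa using hJ), hYm]
      module
  · rintro ⟨hI, -, hYm⟩
    constructor
    · intro hJ
      rw [T_formula ρ v hI 1 (by simpa using hJ), hYm]
      module
    · intro hJ
      rw [T_formula ρ v hI (-1) (by simpa using hJ), hYm]
      module
  · rintro ⟨hI, hYp, hYm⟩
    have adjT : ContinuousLinearMap.adjoint (opT ρ)
        = (2 : ℂ)⁻¹ • (rop ρ Lmat⁻¹ + rop ρ Rmat⁻¹) := by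
      rw [← ContinuousLinearMap.star_eq_adjoint, opT, star_smul, star_add,
        ContinuousLinearMap.star_eq_adjoint, ContinuousLinearMap.star_eq_adjoint,
        rop_adjoint, rop_adjoint]
      norm_num
    have hYp' := Yp_apply ρ v
    rw [hI, hYp] at hYp'
    have hXp : rop ρ (Lmat⁻¹ * Rmat) v = - ((3 / 2 : ℂ) • v - (2 : ℂ)⁻¹ • (-v)
        + rop ρ (Rmat⁻¹ * Lmat) v) := by
      have h3 : (0 : H) = (3 : ℂ) • ((3 : ℂ)⁻¹ • ((3 / 2 : ℂ) • v - (2 : ℂ)⁻¹ • (-v)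
          + rop ρ (Rmat⁻¹ * Lmat) v + rop ρ (Lmat⁻¹ * Rmat) v)) := by
        rw [← hYp', smul_zero]
      rw [smul_inv_smul₀ (by norm_num : (3 : ℂ) ≠ 0)] at h3
      have := h3.symm
      abel_nf at this ⊢
      linear_combination (norm := module) this
    have hYm' := Ym_apply ρ v
    rw [hI, hYm] at hYm'
    have hXm : rop ρ (Rmat * Lmat⁻¹) v = - ((3 / 2 : ℂ) • v - (2 : ℂ)⁻¹ • (-v)
        + rop ρ (Lmat * Rmat⁻¹) v) := by
      have h3 : (0 : H) = (3 : ℂ) • ((3 : ℂ)⁻¹ • ((3 / 2 : ℂ) • v - (2 : ℂ)⁻¹ • (-v)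
          + rop ρ (Lmat * Rmat⁻¹) v + rop ρ (Rmat * Lmat⁻¹) v)) := by
        rw [← hYm', smul_zero]
      rw [smul_inv_smul₀ (by norm_num : (3 : ℂ) ≠ 0)] at h3
      have := h3.symm
      linear_combination (norm := module) this
    have eLL : Lmat⁻¹ * Lmat = (1 : SL2Z) := inv_mul_cancel _
    have eRR : Rmat⁻¹ * Rmat = (1 : SL2Z) := inv_mul_cancel _
    have eLL' : Lmat * Lmat⁻¹ = (1 : SL2Z) := mul_inv_cancel _
    have eRR' : Rmat * Rmat⁻¹ = (1 : SL2Z) := mul_inv_cancel _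
    have hTT : ContinuousLinearMap.adjoint (opT ρ) (opT ρ v) = 0 := by
      rw [adjT, opT]
      simp only [ContinuousLinearMap.smul_apply, ContinuousLinearMap.add_apply,
        map_smul, map_add, rop_rop, eLL, eRR, rop_one]
      rw [hXp]
      module
    have hT'T' : opT ρ (ContinuousLinearMap.adjoint (opT ρ) v) = 0 := by
      rw [adjT, opT]
      simp only [ContinuousLinearMap.smul_apply, ContinuousLinearMap.add_apply,
        map_smul, map_add, rop_rop, eLL', eRR', rop_one]
      rw [hXm]
      module
    constructor
    · have h := ContinuousLinearMap.adjoint_inner_left (opT ρ) v (opT ρ v)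
      rw [hTT, inner_zero_left] at h
      exact inner_self_eq_zero.mp h.symm
    · have h := ContinuousLinearMap.adjoint_inner_right (opT ρ)
        (ContinuousLinearMap.adjoint (opT ρ) v) v
      rw [hT'T', inner_zero_left] at h
      exact inner_self_eq_zero.mp h
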